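/- arXiv:1003.0320 — 3 statements merged into one kernel-verified Lean document; each statement's English description precedes it below -/
import Mathlib

section
/- If j = j(n) → ∞ with j/n → ρ for fixed 0 < ρ < 1, then for each m ≥ 0, P{X_{n,j} - 1 = m} → binom(m - 1/(k+1), m)·ρ^{k/(k+1)}·(1-ρ)^m; i.e., X_{n,j} - 1 converges in distribution to a negative binomial distribution NegBin(k/(k+1), ρ). -/
open Filter Finset

set_option maxHeartbeats 1000000

/-- Generalized binomial coefficient `binom(x, n) = x(x-1)⋯(x-n+1)/n!`. -/
noncomputable def gbinom (x : ℝ) (n : ℕ) : ℝ :=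
  (∏ i ∈ Finset.range n, (x - i)) / (Nat.factorial n)

/-- `P{X_{n,j} = m}`: the exact distribution of the number of descendants of node `j`
in a random ordered increasing `k`-tree of size `n` (for `m ≥ 1`; zero if `m+j > n+1`). -/
noncomputable def Pdesc (k n j m : ℕ) : ℝ :=
  if m + j ≤ n + 1 then
    gbinom ((m : ℝ) - 1 - 1 / ((k : ℝ) + 1)) (m - 1)
      * gbinom ((n : ℝ) - m - 1 + 2 / ((k : ℝ) + 1)) (n - m - j + 1)
      / gbinom ((n : ℝ) - k / ((k : ℝ) + 1)) (n - j)
  else 0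

/-- `∏_{ℓ=1}^{N} (ℓ + a)`, in shifted-range form. -/
noncomputable def Gp (a : ℝ) (N : ℕ) : ℝ := ∏ ℓ ∈ Finset.range N, ((ℓ : ℝ) + 1 + a)

lemma Gp_pos {a : ℝ} (ha : -1 < a) (N : ℕ) : 0 < Gp a N := by
  refine Finset.prod_pos fun i _ => ?_
  have : (0:ℝ) ≤ i := Nat.cast_nonneg i
  linarith

lemma GammaSeq_eq (a : ℝ) (N : ℕ) :
    Real.GammaSeq (1 + a) N = (N : ℝ) ^ (1 + a) * (Nat.factorial N) / Gp a (N + 1) := by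
  unfold Real.GammaSeq Gp
  congr 1
  refine Finset.prod_congr rfl fun i _ => by ring

lemma psi_tendsto {a b : ℝ} (ha : -1 < a) (hb : -1 < b) :
    Tendsto (fun N : ℕ => Gp a (N + 1) / Gp b (N + 1) * (N : ℝ) ^ (b - a)) atTop
      (nhds (Real.Gamma (1 + b) / Real.Gamma (1 + a))) := by
  have h := ((Real.GammaSeq_tendsto_Gamma (1 + b)).div (Real.GammaSeq_tendsto_Gamma (1 + a))
      (ne_of_gt (Real.Gamma_pos_of_pos (by linarith))))
  refine h.congr' ?_
  filter_upwards [eventually_ge_atTop 1] with N hN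
  have hN0 : (0:ℝ) < N := by exact_mod_cast hN
  have hfa : (0:ℝ) < (Nat.factorial N : ℝ) := by exact_mod_cast (Nat.factorial_pos N)
  have hga : (0:ℝ) < Gp a (N+1) := Gp_pos ha _
  have hgb : (0:ℝ) < Gp b (N+1) := Gp_pos hb _
  have e1 : (N:ℝ) ^ (1+b) = (N:ℝ) ^ (b-a) * (N:ℝ) ^ (1+a) := by
    rw [← Real.rpow_add hN0]; ring_nf
  show Real.GammaSeq (1+b) N / Real.GammaSeq (1+a) N = _
  rw [GammaSeq_eq, GammaSeq_eq, e1]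
  have hra : (0:ℝ) < (N:ℝ) ^ (1+a) := Real.rpow_pos_of_pos hN0 _
  field_simp



variable {a b : ℝ} in
lemma Gp_ratio_tendsto (ha : -1 < a) (hb : -1 < b)
    (M J : ℕ → ℕ) (hM : Tendsto M atTop atTop) (hJ : Tendsto J atTop atTop)
    {s : ℝ} (hs : 0 < s)
    (hr : Tendsto (fun n => (M n : ℝ) / (J n : ℝ)) atTop (nhds s)) :
    Tendsto (fun n => Gp a (M n) / Gp b (M n) * (Gp b (J n) / Gp a (J n))) atTop
      (nhds (s ^ (a - b))) := by
  set L := Real.Gamma (1 + b) / Real.Gamma (1 + a) with hL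
  have hLpos : 0 < L :=
    div_pos (Real.Gamma_pos_of_pos (by linarith)) (Real.Gamma_pos_of_pos (by linarith))
  set ψ : ℕ → ℝ := fun N => Gp a (N + 1) / Gp b (N + 1) * (N : ℝ) ^ (b - a) with hψ
  have hMsub : Tendsto (fun n => M n - 1) atTop atTop :=
    (tendsto_sub_atTop_nat 1).comp hM
  have hJsub : Tendsto (fun n => J n - 1) atTop atTop :=
    (tendsto_sub_atTop_nat 1).comp hJ
  have h1 : Tendsto (fun n => ψ (M n - 1)) atTop (nhds L) :=
    (psi_tendsto ha hb).comp hMsub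
  have h2 : Tendsto (fun n => ψ (J n - 1)) atTop (nhds L) :=
    (psi_tendsto ha hb).comp hJsub
  -- (M n - 1)/(J n - 1) → s
  have hMinv : Tendsto (fun n => ((M n : ℝ))⁻¹) atTop (nhds 0) :=
    (tendsto_natCast_atTop_atTop.comp hM).inv_tendsto_atTop
  have hJinv : Tendsto (fun n => ((J n : ℝ))⁻¹) atTop (nhds 0) :=
    (tendsto_natCast_atTop_atTop.comp hJ).inv_tendsto_atTop
  have hq : Tendsto (fun n => ((M n - 1 : ℕ) : ℝ) / ((J n - 1 : ℕ) : ℝ)) atTop (nhds s) := by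
    have key : Tendsto (fun n => ((M n : ℝ) / (J n : ℝ)) * ((1 - (M n:ℝ)⁻¹) / (1 - (J n:ℝ)⁻¹)))
        atTop (nhds (s * ((1 - 0)/(1 - 0)))) := by
      refine hr.mul (Tendsto.div ?_ ?_ (by norm_num))
      · exact tendsto_const_nhds.sub hMinv
      · exact tendsto_const_nhds.sub hJinv
    norm_num at key
    refine key.congr' ?_
    filter_upwards [hM.eventually (eventually_ge_atTop 2), hJ.eventually (eventually_ge_atTop 2)]
      with n hMn hJn
    have hM0 : (0:ℝ) < M n := by exact_mod_cast Nat.lt_of_lt_of_le (by norm_num) hMn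
    have hJ0 : (0:ℝ) < J n := by exact_mod_cast Nat.lt_of_lt_of_le (by norm_num) hJn
    have cM : ((M n - 1 : ℕ) : ℝ) = (M n : ℝ) - 1 := by
      have : 1 ≤ M n := by omega
      push_cast [this]; ring
    have cJ : ((J n - 1 : ℕ) : ℝ) = (J n : ℝ) - 1 := by
      have : 1 ≤ J n := by omega
      push_cast [this]; ring
    rw [cM, cJ]
    have h2M : (2:ℝ) ≤ (M n : ℝ) := by exact_mod_cast hMn
    have h2J : (2:ℝ) ≤ (J n : ℝ) := by exact_mod_cast hJn
    have hMne : (M n : ℝ) ≠ 0 := by linarith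
    have hJne : (J n : ℝ) ≠ 0 := by linarith
    have hJm1 : (J n : ℝ) - 1 ≠ 0 := by intro h; linarith
    have hJi : (1:ℝ) - ((J n : ℝ))⁻¹ ≠ 0 := by
      have : ((J n : ℝ))⁻¹ < 1 := by
        rw [inv_lt_one_iff₀]; right; linarith
      intro h; linarith
    field_simp
  -- rpow part
  have hrpow : Tendsto (fun n => (((M n - 1 : ℕ) : ℝ) / ((J n - 1 : ℕ) : ℝ)) ^ (a - b)) atTop
      (nhds (s ^ (a - b))) := by
    exact ((Real.continuousAt_rpow_const s (a - b) (Or.inl hs.ne')).tendsto).comp hq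
  have main : Tendsto (fun n => (ψ (M n - 1) / ψ (J n - 1)) *
      ((((M n - 1 : ℕ) : ℝ) / ((J n - 1 : ℕ) : ℝ)) ^ (a - b))) atTop
      (nhds ((L / L) * s ^ (a - b))) :=
    (h1.div h2 hLpos.ne').mul hrpow
  rw [div_self hLpos.ne', one_mul] at main
  refine main.congr' ?_
  filter_upwards [hM.eventually (eventually_ge_atTop 2), hJ.eventually (eventually_ge_atTop 2)]
    with n hMn hJn
  have hM1 : (0:ℝ) < ((M n - 1 : ℕ) : ℝ) := by
    have : 1 ≤ M n - 1 := by omega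
    exact_mod_cast Nat.lt_of_lt_of_le (by norm_num) this
  have hJ1 : (0:ℝ) < ((J n - 1 : ℕ) : ℝ) := by
    have : 1 ≤ J n - 1 := by omega
    exact_mod_cast Nat.lt_of_lt_of_le (by norm_num) this
  have eM : M n - 1 + 1 = M n := by omega
  have eJ : J n - 1 + 1 = J n := by omega
  have hgaM := (Gp_pos ha (M n)).ne'
  have hgbM := (Gp_pos hb (M n)).ne'
  have hgaJ := (Gp_pos ha (J n)).ne'
  have hgbJ := (Gp_pos hb (J n)).ne'
  have rM : ((M n - 1 : ℕ) : ℝ) ^ (b - a) * ((M n - 1 : ℕ) : ℝ) ^ (a - b) = 1 := by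
    rw [← Real.rpow_add hM1]; norm_num
  have rJ : ((J n - 1 : ℕ) : ℝ) ^ (b - a) * ((J n - 1 : ℕ) : ℝ) ^ (a - b) = 1 := by
    rw [← Real.rpow_add hJ1]; norm_num
  have hdiv : (((M n - 1 : ℕ) : ℝ) / ((J n - 1 : ℕ) : ℝ)) ^ (a - b)
      = ((M n - 1 : ℕ) : ℝ) ^ (a - b) / ((J n - 1 : ℕ) : ℝ) ^ (a - b) :=
    Real.div_rpow hM1.le hJ1.le _
  simp only [hψ, eM, eJ, hdiv]
  have eq1 : Gp a (M n) / Gp b (M n) * ((M n - 1 : ℕ):ℝ) ^ (b - a) * ((M n - 1 : ℕ):ℝ) ^ (a - b)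
      = Gp a (M n) / Gp b (M n) := by rw [mul_assoc, rM, mul_one]
  have eq2 : Gp a (J n) / Gp b (J n) * ((J n - 1 : ℕ):ℝ) ^ (b - a) * ((J n - 1 : ℕ):ℝ) ^ (a - b)
      = Gp a (J n) / Gp b (J n) := by rw [mul_assoc, rJ, mul_one]
  rw [div_mul_div_comm, eq1, eq2]
  field_simp

lemma Pdesc_eq (k n jv m : ℕ) (hk : 1 ≤ k) (hj : 1 ≤ jv) (hn : jv + m + 2 ≤ n) :
    Pdesc k n jv (m+1) =
      gbinom ((m:ℝ) - 1/((k:ℝ)+1)) m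
      * (Gp (2/((k:ℝ)+1) - 1) (n-m-1) / Gp (1/((k:ℝ)+1)) (n-m-1)
         * (Gp (1/((k:ℝ)+1)) (jv-1) / Gp (2/((k:ℝ)+1) - 1) (jv-1)))
      * ∏ i ∈ Finset.range m,
          (((n - m - jv + 1 + i : ℕ):ℝ) / (((n - m + i : ℕ):ℝ) + 1/((k:ℝ)+1))) := by
  set K : ℝ := (k:ℝ)+1 with hK
  have hK0 : (0:ℝ) < K := by positivity
  set a : ℝ := 2/K - 1 with ha'
  set b : ℝ := 1/K with hb'
  have hb0 : 0 < b := by positivity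
  have haneg : (-1:ℝ) < a := by
    have h2 : (0:ℝ) < 2/K := by positivity
    calc (-1:ℝ) = 0 - 1 := by ring
      _ < 2/K - 1 := by linarith
      _ = a := ha'.symm
  have hbneg : (-1:ℝ) < b := by linarith
  have hbK : b ≤ 1 := by
    rw [hb']; rw [div_le_one hK0]; linarith
  rw [Pdesc, if_pos (by omega : m + 1 + jv ≤ n + 1)]
  have hN1 : n - (m+1) - jv + 1 = n - m - jv := by omega
  rw [hN1]
  -- first gbinom
  have hC : gbinom ((↑(m+1) : ℝ) - 1 - 1 / ((k:ℝ) + 1)) (m + 1 - 1)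
      = gbinom ((m:ℝ) - b) m := by
    have e : ((m+1 : ℕ) : ℝ) - 1 - 1 / ((k:ℝ)+1) = (m:ℝ) - b := by
      rw [hb', hK]; push_cast; ring
    rw [e, Nat.add_sub_cancel]
  rw [hC]
  set Cc : ℝ := gbinom ((m:ℝ) - b) m with hCc
  -- numerator product
  have P1 : (∏ i ∈ Finset.range (n - m - jv), (((n:ℝ) - ↑(m+1) - 1 + 2/((k:ℝ)+1)) - i))
      = ∏ ℓ ∈ Finset.Ico (jv-1) (n-m-1), ((ℓ:ℝ) + 1 + a) := by
    rw [Finset.prod_Ico_eq_prod_range]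
    rw [show (n-m-1) - (jv-1) = n - m - jv from by omega]
    rw [← Finset.prod_range_reflect]
    refine Finset.prod_congr rfl fun i hi => ?_
    rw [Finset.mem_range] at hi
    have c1 : ((n - m - jv - 1 - i : ℕ) : ℝ) = (n:ℝ) - m - jv - 1 - i := by
      rw [show n - m - jv - 1 - i = n - (m + jv + 1 + i) from by omega,
        Nat.cast_sub (by omega)]
      push_cast; ring
    have c2 : ((jv - 1 + i : ℕ) : ℝ) = (jv:ℝ) - 1 + i := by
      rw [Nat.cast_add, Nat.cast_sub hj]; push_cast; ring
    rw [c1, c2, ha']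
    push_cast
    ring
  -- denominator product
  have P2 : (∏ i ∈ Finset.range (n - jv), (((n:ℝ) - ↑k/((k:ℝ)+1)) - i))
      = ∏ ℓ ∈ Finset.Ico (jv-1) (n-1), ((ℓ:ℝ) + 1 + b) := by
    rw [Finset.prod_Ico_eq_prod_range]
    rw [show (n-1) - (jv-1) = n - jv from by omega]
    rw [← Finset.prod_range_reflect]
    refine Finset.prod_congr rfl fun i hi => ?_
    rw [Finset.mem_range] at hi
    have c1 : ((n - jv - 1 - i : ℕ) : ℝ) = (n:ℝ) - jv - 1 - i := by
      rw [show n - jv - 1 - i = n - (jv + 1 + i) from by omega,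
        Nat.cast_sub (by omega)]
      push_cast; ring
    have c2 : ((jv - 1 + i : ℕ) : ℝ) = (jv:ℝ) - 1 + i := by
      rw [Nat.cast_add, Nat.cast_sub hj]; push_cast; ring
    have hx2 : (n:ℝ) - ↑k/((k:ℝ)+1) = (n:ℝ) - 1 + 1/K := by
      rw [hK]; field_simp; ring
    rw [c1, c2, hx2, hb']
    ring
  simp only [gbinom]
  rw [P1, P2]
  -- split facts
  have f1 : Gp a (jv-1) * (∏ ℓ ∈ Finset.Ico (jv-1) (n-m-1), ((ℓ:ℝ) + 1 + a)) = Gp a (n-m-1) :=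
    Finset.prod_range_mul_prod_Ico _ (by omega)
  have f2 : Gp b (jv-1) * (∏ ℓ ∈ Finset.Ico (jv-1) (n-1), ((ℓ:ℝ) + 1 + b)) = Gp b (n-1) :=
    Finset.prod_range_mul_prod_Ico _ (by omega)
  have f3 : Gp b (n-m-1) * (∏ ℓ ∈ Finset.Ico (n-m-1) (n-1), ((ℓ:ℝ) + 1 + b)) = Gp b (n-1) :=
    Finset.prod_range_mul_prod_Ico _ (by omega)
  -- factorial fact
  have hfactN : (∏ ℓ ∈ Finset.range (n - jv), (ℓ + 1))
      = (n - jv).factorial := Finset.prod_range_add_one_eq_factorial _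
  have hfact : ((n - jv).factorial : ℝ)
      = ((n - m - jv).factorial : ℝ) * ∏ ℓ ∈ Finset.Ico (n-m-jv) (n-jv), ((ℓ:ℝ) + 1) := by
    have h := Finset.prod_range_mul_prod_Ico (fun ℓ => ℓ + 1) (show n - m - jv ≤ n - jv by omega)
    rw [Finset.prod_range_add_one_eq_factorial] at h
    calc ((n - jv).factorial : ℝ) = ((∏ ℓ ∈ Finset.range (n - jv), (ℓ + 1) : ℕ) : ℝ) := by
          rw [hfactN]
      _ = _ := by
          rw [← h]
          push_cast
          ring
  -- reindex m-products
  have g1 : ∏ ℓ ∈ Finset.Ico (n-m-jv) (n-jv), ((ℓ:ℝ) + 1)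
      = ∏ i ∈ Finset.range m, ((n - m - jv + 1 + i : ℕ) : ℝ) := by
    rw [Finset.prod_Ico_eq_prod_range, show (n - jv) - (n - m - jv) = m from by omega]
    refine Finset.prod_congr rfl fun i hi => ?_
    rw [show n - m - jv + 1 + i = (n - m - jv + i) + 1 from by omega]
    push_cast; ring
  have g2 : ∏ ℓ ∈ Finset.Ico (n-m-1) (n-1), ((ℓ:ℝ) + 1 + b)
      = ∏ i ∈ Finset.range m, (((n - m + i : ℕ) : ℝ) + b) := by
    rw [Finset.prod_Ico_eq_prod_range, show (n - 1) - (n - m - 1) = m from by omega]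
    refine Finset.prod_congr rfl fun i hi => ?_
    rw [show n - m + i = (n - m - 1 + i) + 1 from by omega]
    push_cast; ring
  -- division forms
  have hGaJ := Gp_pos haneg (jv-1)
  have hGbJ := Gp_pos hbneg (jv-1)
  have hGaM := Gp_pos haneg (n-m-1)
  have hGbM := Gp_pos hbneg (n-m-1)
  have hE : (0:ℝ) < ∏ i ∈ Finset.range m, ((n - m - jv + 1 + i : ℕ) : ℝ) := by
    refine Finset.prod_pos fun i _ => ?_
    have : 0 < n - m - jv + 1 + i := by omega
    exact_mod_cast this
  have hD : (0:ℝ) < ∏ i ∈ Finset.range m, (((n - m + i : ℕ) : ℝ) + b) := by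
    refine Finset.prod_pos fun i _ => ?_
    have : (0:ℝ) ≤ ((n - m + i : ℕ) : ℝ) := Nat.cast_nonneg _
    linarith
  have hF1 : (0:ℝ) < ((n - m - jv).factorial : ℝ) := by
    exact_mod_cast Nat.factorial_pos _
  have hP1eq : (∏ ℓ ∈ Finset.Ico (jv-1) (n-m-1), ((ℓ:ℝ) + 1 + a))
      = Gp a (n-m-1) / Gp a (jv-1) := by
    rw [eq_div_iff hGaJ.ne', mul_comm]; exact f1
  have hP2eq : (∏ ℓ ∈ Finset.Ico (jv-1) (n-1), ((ℓ:ℝ) + 1 + b))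
      = Gp b (n-m-1) * (∏ i ∈ Finset.range m, (((n - m + i : ℕ) : ℝ) + b)) / Gp b (jv-1) := by
    rw [eq_div_iff hGbJ.ne', mul_comm, f2, ← f3, g2]
  have hN2eq : ((n - jv).factorial : ℝ)
      = ((n - m - jv).factorial : ℝ) * ∏ i ∈ Finset.range m, ((n - m - jv + 1 + i : ℕ) : ℝ) := by
    rw [hfact, g1]
  rw [hP1eq, hP2eq, hN2eq, Finset.prod_div_distrib]
  field_simp

/-- Central region: if `j(n)/n → ρ ∈ (0,1)`, then `X_{n,j} - 1` converges in
distribution to `NegBin(k/(k+1), ρ)`: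
`P{X_{n,j} - 1 = m} → binom(m-1/(k+1), m) ρ^{k/(k+1)} (1-ρ)^m`. -/
theorem ktree_descendants_central (k : ℕ) (hk : 1 ≤ k) (j : ℕ → ℕ) (ρ : ℝ)
    (hρ0 : 0 < ρ) (hρ1 : ρ < 1)
    (hj : Tendsto (fun n : ℕ => (j n : ℝ) / n) atTop (nhds ρ))
    (hjinf : Tendsto j atTop atTop) (m : ℕ) :
    Tendsto (fun n : ℕ => Pdesc k n (j n) (m + 1)) atTop
      (nhds (gbinom ((m : ℝ) - 1 / ((k : ℝ) + 1)) m
        * ρ ^ ((k : ℝ) / ((k : ℝ) + 1)) * (1 - ρ) ^ m)) := by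
  have hK0 : (0:ℝ) < (k:ℝ) + 1 := by positivity
  set K : ℝ := (k:ℝ) + 1 with hKdef
  set a : ℝ := 2/K - 1 with ha'
  set b : ℝ := 1/K with hb'
  have hb0 : 0 < b := by positivity
  have haneg : (-1:ℝ) < a := by
    have h2 : (0:ℝ) < 2/K := by positivity
    calc (-1:ℝ) = 0 - 1 := by ring
      _ < 2/K - 1 := by linarith
      _ = a := ha'.symm
  have hbneg : (-1:ℝ) < b := by linarith
  -- eventual regime
  have hev : ∀ᶠ n : ℕ in atTop, 1 ≤ j n ∧ j n + m + 2 ≤ n := by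
    have h1 : ∀ᶠ n : ℕ in atTop, (j n : ℝ) / n < (1 + ρ)/2 :=
      hj.eventually (gt_mem_nhds (by linarith : ρ < (1 + ρ)/2))
    have h2 : Tendsto (fun n : ℕ => (n : ℝ) * ((1 - ρ)/2)) atTop atTop :=
      Tendsto.atTop_mul_const (by linarith) tendsto_natCast_atTop_atTop
    have h3 : ∀ᶠ n : ℕ in atTop, (m : ℝ) + 3 ≤ (n : ℝ) * ((1 - ρ)/2) :=
      h2.eventually_ge_atTop _
    filter_upwards [h1, h3, eventually_ge_atTop 1, hjinf.eventually (eventually_ge_atTop 1)]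
      with n hn1 hn3 hn4 hn5
    refine ⟨hn5, ?_⟩
    have hnpos : (0:ℝ) < n := by exact_mod_cast hn4
    have hjn : (j n : ℝ) < (n : ℝ) * ((1 + ρ)/2) := by
      have := (div_lt_iff₀ hnpos).mp hn1
      linarith [this]
    have : (j n : ℝ) + m + 2 ≤ (n : ℝ) := by nlinarith
    exact_mod_cast this
  -- piece A : Gp ratio
  have hMten : Tendsto (fun n : ℕ => n - m - 1) atTop atTop := by
    refine (tendsto_sub_atTop_nat (m + 1)).congr fun n => ?_
    omega
  have hJten : Tendsto (fun n : ℕ => j n - 1) atTop atTop :=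
    (tendsto_sub_atTop_nat 1).comp hjinf
  have hinvn : ∀ c : ℝ, Tendsto (fun n : ℕ => c / n) atTop (nhds 0) :=
    fun c => tendsto_const_div_atTop_nhds_zero_nat c
  have hrA : Tendsto (fun n : ℕ => ((n - m - 1 : ℕ) : ℝ) / ((j n - 1 : ℕ) : ℝ)) atTop
      (nhds ρ⁻¹) := by
    have hnum : Tendsto (fun n : ℕ => ((n : ℝ) - (m + 1)) / n) atTop (nhds 1) := by
      have : Tendsto (fun n : ℕ => 1 - ((m : ℝ) + 1) / n) atTop (nhds (1 - 0)) :=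
        tendsto_const_nhds.sub (hinvn _)
      rw [sub_zero] at this
      refine this.congr' ?_
      filter_upwards [eventually_ge_atTop 1] with n hn
      have hnpos : (0:ℝ) < n := by exact_mod_cast hn
      field_simp
    have hden : Tendsto (fun n : ℕ => ((j n : ℝ) - 1) / n) atTop (nhds ρ) := by
      have : Tendsto (fun n : ℕ => (j n : ℝ) / n - 1 / n) atTop (nhds (ρ - 0)) :=
        hj.sub (hinvn 1)
      rw [sub_zero] at this
      refine this.congr ?_
      intro n
      ring
    have hq := hnum.div hden hρ0.ne'
    rw [show (1:ℝ) / ρ = ρ⁻¹ from one_div ρ] at hq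
    refine hq.congr' ?_
    filter_upwards [hev, eventually_ge_atTop 1] with n hn hn1
    have hnpos : (0:ℝ) < n := by exact_mod_cast hn1
    simp only [Pi.div_apply]
    rw [div_div_div_cancel_right₀ (by exact_mod_cast hnpos.ne' : (n:ℝ) ≠ 0)]
    congr 1
    · rw [show n - m - 1 = n - (m + 1) from by omega, Nat.cast_sub (by omega)]
      push_cast; ring
    · rw [Nat.cast_sub (by omega)]
      push_cast; ring
  have hA : Tendsto (fun n : ℕ => Gp a (n - m - 1) / Gp b (n - m - 1)
      * (Gp b (j n - 1) / Gp a (j n - 1))) atTop (nhds (ρ ^ ((k:ℝ)/K))) := by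
    have h := Gp_ratio_tendsto haneg hbneg _ _ hMten hJten (inv_pos.mpr hρ0) hrA
    have e : (ρ⁻¹) ^ (a - b) = ρ ^ ((k:ℝ)/K) := by
      rw [Real.inv_rpow hρ0.le, ← Real.rpow_neg hρ0.le]
      congr 1
      rw [ha', hb', hKdef]
      field_simp
      ring
    rw [e] at h
    exact h
  -- piece B : the m-fold product
  have hB : Tendsto (fun n : ℕ => ∏ i ∈ Finset.range m,
      (((n - m - j n + 1 + i : ℕ):ℝ) / (((n - m + i : ℕ):ℝ) + b))) atTop
      (nhds ((1 - ρ) ^ m)) := by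
    have hprod : (1 - ρ) ^ m = ∏ _i ∈ Finset.range m, (1 - ρ) := by
      rw [Finset.prod_const, Finset.card_range]
    rw [hprod]
    refine tendsto_finset_prod _ fun i _ => ?_
    have hnum : Tendsto (fun n : ℕ => ((n : ℝ) - m - j n + 1 + i) / n) atTop (nhds (1 - ρ)) := by
      have h1 : Tendsto (fun n : ℕ => 1 - (j n : ℝ) / n + ((1 : ℝ) + i - m) / n) atTop
          (nhds (1 - ρ + 0)) := (tendsto_const_nhds.sub hj).add (hinvn _)
      rw [add_zero] at h1
      refine h1.congr' ?_
      filter_upwards [eventually_ge_atTop 1] with n hn1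
      have hnpos : (0:ℝ) < n := by exact_mod_cast hn1
      field_simp
      ring
    have hden : Tendsto (fun n : ℕ => ((n : ℝ) - m + i + b) / n) atTop (nhds 1) := by
      have h1 : Tendsto (fun n : ℕ => 1 + ((i : ℝ) - m + b) / n) atTop (nhds (1 + 0)) :=
        tendsto_const_nhds.add (hinvn _)
      rw [add_zero] at h1
      refine h1.congr' ?_
      filter_upwards [eventually_ge_atTop 1] with n hn1
      have hnpos : (0:ℝ) < n := by exact_mod_cast hn1
      field_simp
      ring
    have hq := hnum.div hden one_ne_zero
    rw [div_one] at hq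
    refine hq.congr' ?_
    filter_upwards [hev, eventually_ge_atTop 1] with n hn hn1
    have hnpos : (0:ℝ) < n := by exact_mod_cast hn1
    simp only [Pi.div_apply]
    rw [div_div_div_cancel_right₀ (by exact_mod_cast hnpos.ne' : (n:ℝ) ≠ 0)]
    congr 1
    · rw [show n - m - j n + 1 + i = n - (m + j n) + (1 + i) from by omega,
        Nat.cast_add, Nat.cast_sub (by omega)]
      push_cast; ring
    · rw [Nat.cast_add, Nat.cast_sub (by omega)]
  -- assemble
  have htot := (tendsto_const_nhds (x := gbinom ((m:ℝ) - 1/K) m)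
      (f := atTop (α := ℕ))).mul hA |>.mul hB
  refine htot.congr' ?_
  filter_upwards [hev] with n hn
  rw [Pdesc_eq k n (j n) m hk hn.1 hn.2]
end

section
/- For fixed integer k ≥ 1 and v in a neighbourhood of 1, the polynomial equation k!·v/(k+1)^k = ∏_{r=0}^{k-1}(α - r/(k+1)) in α has, at v = 1, the simple root α = k/(k+1), and this is the root with the largest real part among all k roots. -/
/-- Auxiliary: `∏_{r<k} (k-r) = k!` in naturals. -/
lemma ktree_nat_prod (k : ℕ) : ∏ r ∈ Finset.range k, (k - r) = Nat.factorial k := by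
  rw [← Finset.prod_range_add_one_eq_factorial k,
    ← Finset.prod_range_reflect (fun j => j + 1) k]
  exact Finset.prod_congr rfl fun j hj => by
    have := Finset.mem_range.1 hj; omega

/-- Auxiliary: the key product identity in any characteristic-zero field. -/
lemma ktree_prod_eq (K : Type*) [Field K] [CharZero K] (k : ℕ) :
    ∏ r ∈ Finset.range k, (((k : K) - r) / ((k : K) + 1))
      = (Nat.factorial k : K) / ((k : K) + 1) ^ k := by
  rw [Finset.prod_div_distrib, Finset.prod_const, Finset.card_range]
  congr 1
  have : ∏ r ∈ Finset.range k, ((k : K) - r)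
      = ∏ r ∈ Finset.range k, (((k - r : ℕ) : K)) := by
    refine Finset.prod_congr rfl fun r hr => ?_
    have hr' := Finset.mem_range.1 hr
    rw [Nat.cast_sub hr'.le]
  rw [this, ← Nat.cast_prod, ktree_nat_prod]

/-- At `v = 1`, the characteristic equation `k!/(k+1)^k = ∏_{r=0}^{k-1}(α - r/(k+1))`
has the simple root `α = k/(k+1)`, which is the root of largest real part. -/
theorem ktree_char_root (k : ℕ) (hk : 1 ≤ k) :
    (∏ r ∈ Finset.range k, (((k : ℂ) / ((k : ℂ) + 1)) - (r : ℂ) / ((k : ℂ) + 1))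
        = (Nat.factorial k : ℂ) / ((k : ℂ) + 1) ^ k) ∧
    deriv (fun α : ℂ => ∏ r ∈ Finset.range k, (α - (r : ℂ) / ((k : ℂ) + 1)))
        ((k : ℂ) / ((k : ℂ) + 1)) ≠ 0 ∧
    (∀ α : ℂ, (∏ r ∈ Finset.range k, (α - (r : ℂ) / ((k : ℂ) + 1)))
        = (Nat.factorial k : ℂ) / ((k : ℂ) + 1) ^ k →
      α ≠ (k : ℂ) / ((k : ℂ) + 1) → α.re < (k : ℝ) / ((k : ℝ) + 1)) := by
  have hkR : (0 : ℝ) < (k : ℝ) + 1 := by positivity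
  have hfacC : ∏ r ∈ Finset.range k, (((k : ℂ) / ((k : ℂ) + 1)) - (r : ℂ) / ((k : ℂ) + 1))
      = (Nat.factorial k : ℂ) / ((k : ℂ) + 1) ^ k := by
    rw [← ktree_prod_eq ℂ k]
    exact Finset.prod_congr rfl fun r _ => by rw [div_sub_div_same, sub_div]
  refine ⟨hfacC, ?_, ?_⟩
  · -- derivative nonzero
    set x0 : ℂ := (k : ℂ) / ((k : ℂ) + 1) with hx0
    have hd : HasDerivAt (fun α : ℂ => ∏ r ∈ Finset.range k, (α - (r : ℂ) / ((k : ℂ) + 1)))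
        (∑ i ∈ Finset.range k,
          (∏ j ∈ (Finset.range k).erase i, (x0 - (j : ℂ) / ((k : ℂ) + 1))) • (1 : ℂ)) x0 :=
      HasDerivAt.fun_finsetProd fun i _ => (hasDerivAt_id x0).sub_const _
    rw [hd.deriv]
    have hterm : ∀ i ∈ Finset.range k,
        (∏ j ∈ (Finset.range k).erase i, (x0 - (j : ℂ) / ((k : ℂ) + 1))) • (1 : ℂ)
          = ((∏ j ∈ (Finset.range k).erase i, (((k : ℝ) - j) / ((k : ℝ) + 1)) : ℝ) : ℂ) := by
      intro i _
      rw [smul_eq_mul, mul_one]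
      push_cast
      exact Finset.prod_congr rfl fun j _ => by rw [hx0, div_sub_div_same, sub_div]
    rw [Finset.sum_congr rfl hterm, ← Complex.ofReal_sum]
    rw [Complex.ofReal_ne_zero]
    have hpos : (0 : ℝ) < ∑ i ∈ Finset.range k,
        ∏ j ∈ (Finset.range k).erase i, (((k : ℝ) - j) / ((k : ℝ) + 1)) := by
      refine Finset.sum_pos (fun i _ => Finset.prod_pos fun j hj => ?_) ?_
      · have hj' := Finset.mem_range.1 (Finset.mem_of_mem_erase hj)
        have : (j : ℝ) < k := by exact_mod_cast hj'
        exact div_pos (by linarith) hkR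
      · exact ⟨0, Finset.mem_range.2 hk⟩
    exact ne_of_gt hpos
  · -- largest real part
    intro α hα hne
    by_contra hcon
    push_neg at hcon
    set t : ℝ := (k : ℝ) / ((k : ℝ) + 1) with ht
    have ht0 : 0 ≤ t := by positivity
    have hcast : ∀ r : ℕ, ((r : ℂ) / ((k : ℂ) + 1)) = (((r : ℝ) / ((k : ℝ) + 1) : ℝ) : ℂ) := by
      intro r; push_cast; ring
    have hre : ∀ r : ℕ, (α - (r : ℂ) / ((k : ℂ) + 1)).re = α.re - (r : ℝ) / ((k : ℝ) + 1) := by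
      intro r; rw [hcast r, Complex.sub_re, Complex.ofReal_re]
    have hfg : ∀ r ∈ Finset.range k,
        ((k : ℝ) - r) / ((k : ℝ) + 1) ≤ ‖α - (r : ℂ) / ((k : ℂ) + 1)‖ := by
      intro r hr
      have h1 : ((k : ℝ) - r) / ((k : ℝ) + 1) ≤ (α - (r : ℂ) / ((k : ℂ) + 1)).re := by
        rw [hre r, sub_div]
        have : (k : ℝ) / ((k : ℝ) + 1) ≤ α.re := hcon
        linarith
      exact h1.trans (Complex.re_le_norm _)
    have hf : ∀ r ∈ Finset.range k, (0 : ℝ) < ((k : ℝ) - r) / ((k : ℝ) + 1) := by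
      intro r hr
      have : (r : ℝ) < k := by exact_mod_cast Finset.mem_range.1 hr
      exact div_pos (by linarith) hkR
    have hstrict : ((k : ℝ) - (0 : ℕ)) / ((k : ℝ) + 1) < ‖α - ((0 : ℕ) : ℂ) / ((k : ℂ) + 1)‖ := by
      simp only [Nat.cast_zero, sub_zero, zero_div]
      rcases lt_or_eq_of_le hcon with h | h
      · exact h.trans_le (Complex.re_le_norm α)
      · -- α.re = t, so α.im ≠ 0
        have him : α.im ≠ 0 := by
          intro h0'
          apply hne
          have : α = ((α.re : ℝ) : ℂ) := by
            apply Complex.ext <;> simp [h0']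
          rw [this, ← h]
          push_cast [ht]
          ring
        calc (k : ℝ) / ((k : ℝ) + 1) = α.re := h
          _ ≤ |α.re| := le_abs_self _
          _ < ‖α‖ := Complex.abs_re_lt_norm.2 him
    have hltp : ∏ r ∈ Finset.range k, (((k : ℝ) - r) / ((k : ℝ) + 1))
        < ∏ r ∈ Finset.range k, ‖α - (r : ℂ) / ((k : ℂ) + 1)‖ :=
      Finset.prod_lt_prod hf hfg ⟨0, Finset.mem_range.2 hk, hstrict⟩
    have hnorm : ∏ r ∈ Finset.range k, ‖α - (r : ℂ) / ((k : ℂ) + 1)‖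
        = (Nat.factorial k : ℝ) / ((k : ℝ) + 1) ^ k := by
      rw [← norm_prod, hα]
      rw [norm_div, norm_pow]
      have h1 : ‖(Nat.factorial k : ℂ)‖ = (Nat.factorial k : ℝ) := by
        simp
      have h2 : ‖(k : ℂ) + 1‖ = (k : ℝ) + 1 := by
        have : ((k : ℂ) + 1) = (((k : ℝ) + 1 : ℝ) : ℂ) := by push_cast; ring
        rw [this, Complex.norm_real, Real.norm_eq_abs, abs_of_pos hkR]
      rw [h1, h2]
    rw [hnorm, ← ktree_prod_eq ℝ k] at hltp
    exact lt_irrefl _ hltp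
end

section
/- Let α_1(v) be the root of k!·v/(k+1)^k = ∏_{r=0}^{k-1}(α - r/(k+1)) with α_1(1) = k/(k+1), analytic in v near 1. Then the derivatives at v = 1 satisfy: d/ds[α_1(e^s)]|_{s=0} = 1/((k+1)H_k) and d²/ds²[α_1(e^s)]|_{s=0} = H_k^{(2)}/((k+1)H_k^3), where H_k = ∑_{ℓ=1}^k 1/ℓ and H_k^{(2)} = ∑_{ℓ=1}^k 1/ℓ². -/
/-- Let `g s = α_1(e^s)`, where `α_1(v)` is the analytic root of
`∏_{r=0}^{k-1}(α - r/(k+1)) = k! v/(k+1)^k` with `α_1(1) = k/(k+1)`. Then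
`g'(0) = 1/((k+1)H_k)` and `g''(0) = H_k^{(2)}/((k+1)H_k³)`. -/
theorem ktree_char_root_derivs (k : ℕ) (hk : 1 ≤ k) (g : ℝ → ℝ) (hg : ContDiff ℝ 2 g)
    (heq : ∀ᶠ s in nhds (0 : ℝ),
      ∏ r ∈ Finset.range k, (g s - (r : ℝ) / ((k : ℝ) + 1))
        = (Nat.factorial k : ℝ) * Real.exp s / ((k : ℝ) + 1) ^ k)
    (h0 : g 0 = (k : ℝ) / ((k : ℝ) + 1)) :
    deriv g 0 = 1 / (((k : ℝ) + 1) * (∑ ℓ ∈ Finset.Icc 1 k, (1 : ℝ) / ℓ)) ∧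
    deriv (deriv g) 0
      = (∑ ℓ ∈ Finset.Icc 1 k, (1 : ℝ) / (ℓ : ℝ) ^ 2)
        / (((k : ℝ) + 1) * (∑ ℓ ∈ Finset.Icc 1 k, (1 : ℝ) / ℓ) ^ 3) := by
  classical
  set K : ℝ := (k : ℝ) + 1 with hKdef
  have hKpos : (0 : ℝ) < K := by positivity
  set c : ℕ → ℝ := fun r => (r : ℝ) / K with hcdef
  -- differentiability facts
  have hgdiff : Differentiable ℝ g := hg.differentiable (by norm_num)
  have hg1 : ContDiff ℝ 1 (deriv g) := by
    have h2 : ContDiff ℝ ((1 : ℕ) + 1) g := by exact_mod_cast hg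
    exact (contDiff_succ_iff_deriv.mp (by exact_mod_cast h2)).2.2
  have hg'diff : Differentiable ℝ (deriv g) := hg1.differentiable (by norm_num)
  -- positivity of factors at 0
  have hb0 : ∀ r ∈ Finset.range k, (0 : ℝ) < g 0 - c r := by
    intro r hr
    have hrk : (r : ℝ) < (k : ℝ) := by exact_mod_cast Finset.mem_range.mp hr
    rw [h0]
    have : (k : ℝ) / K - (r : ℝ) / K = ((k : ℝ) - r) / K := by ring
    simp only [hcdef]
    rw [show (k : ℝ) / ((k : ℝ) + 1) = (k : ℝ) / K from rfl, this]
    exact div_pos (by linarith) hKpos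
  -- positivity of factors eventually
  have hpos : ∀ᶠ s in nhds (0 : ℝ), ∀ r ∈ Finset.range k, 0 < g s - c r := by
    rw [Filter.eventually_all_finset]
    intro r hr
    have hcont : ContinuousAt (fun s => g s - c r) 0 :=
      (hgdiff.continuous.continuousAt).sub continuousAt_const
    exact hcont.eventually (eventually_gt_nhds (hb0 r hr))
  -- the factor values at 0
  have hb : ∀ r ∈ Finset.range k, g 0 - c r = ((k - r : ℕ) : ℝ) / K := by
    intro r hr
    have hrk : r ≤ k := le_of_lt (Finset.mem_range.mp hr)
    rw [h0, Nat.cast_sub hrk]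
    simp only [hcdef]
    rw [show (k : ℝ) / ((k : ℝ) + 1) = (k : ℝ) / K from rfl]
    ring
  -- factors at 0 as naturals are positive
  have hbnat : ∀ r ∈ Finset.range k, (0 : ℝ) < ((k - r : ℕ) : ℝ) := by
    intro r hr
    have : 0 < k - r := Nat.sub_pos_of_lt (Finset.mem_range.mp hr)
    exact_mod_cast this
  -- reindexing lemma
  have key : ∀ f : ℕ → ℝ,
      ∑ r ∈ Finset.range k, f (k - r) = ∑ ℓ ∈ Finset.Icc 1 k, f ℓ := by
    intro f
    rw [show Finset.Icc 1 k = Finset.Ico 1 (k + 1) by rw [Finset.Ico_add_one_right_eq_Icc],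
      Finset.sum_Ico_eq_sum_range]
    simp only [Nat.add_sub_cancel]
    rw [← Finset.sum_range_reflect (fun i => f (1 + i)) k]
    apply Finset.sum_congr rfl
    intro j hj
    have := Finset.mem_range.mp hj
    congr 1
    omega
  -- harmonic numbers
  set H : ℝ := ∑ ℓ ∈ Finset.Icc 1 k, (1 : ℝ) / ℓ with hHdef
  set H2 : ℝ := ∑ ℓ ∈ Finset.Icc 1 k, (1 : ℝ) / (ℓ : ℝ) ^ 2 with hH2def
  have hHpos : 0 < H := by
    apply Finset.sum_pos
    · intro ℓ hℓ
      have h1 : 1 ≤ ℓ := (Finset.mem_Icc.mp hℓ).1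
      have : (0 : ℝ) < ℓ := by exact_mod_cast Nat.lt_of_lt_of_le Nat.zero_lt_one h1
      positivity
    · exact ⟨1, Finset.mem_Icc.mpr ⟨le_rfl, hk⟩⟩
  -- S1 and S2
  have hS1 : ∑ r ∈ Finset.range k, (g 0 - c r)⁻¹ = K * H := by
    have : ∀ r ∈ Finset.range k, (g 0 - c r)⁻¹ = K * (1 / ((k - r : ℕ) : ℝ)) := by
      intro r hr
      rw [hb r hr]
      field_simp
    rw [Finset.sum_congr rfl this, ← Finset.mul_sum,
      key (fun ℓ => 1 / (ℓ : ℝ))]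
  have hS2 : ∑ r ∈ Finset.range k, ((g 0 - c r) ^ 2)⁻¹ = K ^ 2 * H2 := by
    have : ∀ r ∈ Finset.range k,
        ((g 0 - c r) ^ 2)⁻¹ = K ^ 2 * (1 / (((k - r : ℕ) : ℝ)) ^ 2) := by
      intro r hr
      rw [hb r hr]
      have := hbnat r hr
      field_simp
    rw [Finset.sum_congr rfl this, ← Finset.mul_sum]
    congr 1
    exact key (fun ℓ => 1 / (ℓ : ℝ) ^ 2)
  -- log transform of the defining equation
  set C₀ : ℝ := (Nat.factorial k : ℝ) / K ^ k with hC0def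
  have hlog : (fun s => ∑ r ∈ Finset.range k, Real.log (g s - c r))
      =ᶠ[nhds (0 : ℝ)] fun s => Real.log C₀ + s := by
    filter_upwards [heq, hpos] with s h1 h2
    rw [← Real.log_prod (fun r hr => (h2 r hr).ne')]
    rw [show ∏ r ∈ Finset.range k, (g s - c r)
        = ∏ r ∈ Finset.range k, (g s - (r : ℝ) / ((k : ℝ) + 1)) from rfl, h1]
    rw [show (Nat.factorial k : ℝ) * Real.exp s / ((k : ℝ) + 1) ^ k
        = C₀ * Real.exp s by rw [hC0def]; ring]
    rw [Real.log_mul (by positivity) (Real.exp_ne_zero s), Real.log_exp]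
  -- first derivative relation, eventually
  have E1 : (fun s => ∑ r ∈ Finset.range k, deriv g s / (g s - c r))
      =ᶠ[nhds (0 : ℝ)] fun _ => 1 := by
    have hd := hlog.deriv
    filter_upwards [hd, hpos] with s h1 h2
    have hL : HasDerivAt (fun s => ∑ r ∈ Finset.range k, Real.log (g s - c r))
        (∑ r ∈ Finset.range k, deriv g s / (g s - c r)) s := by
      apply HasDerivAt.fun_sum
      intro r hr
      exact (((hgdiff s).hasDerivAt).sub_const _).log (h2 r hr).ne'
    have hR : deriv (fun s => Real.log C₀ + s) s = 1 := by
      rw [deriv_const_add]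
      simp
    calc ∑ r ∈ Finset.range k, deriv g s / (g s - c r)
        = deriv (fun s => ∑ r ∈ Finset.range k, Real.log (g s - c r)) s := hL.deriv.symm
      _ = deriv (fun s => Real.log C₀ + s) s := h1
      _ = 1 := hR
  -- first derivative equation at 0
  have Eq1 : deriv g 0 * (K * H) = 1 := by
    have h : ∑ r ∈ Finset.range k, deriv g 0 / (g 0 - c r) = 1 := E1.self_of_nhds
    rw [← hS1, Finset.mul_sum, ← h]
    exact Finset.sum_congr rfl fun r hr => (div_eq_mul_inv _ _).symm
  -- second derivative equation at 0
  have Eq2 : deriv (deriv g) 0 * (K * H) = (deriv g 0) ^ 2 * (K ^ 2 * H2) := by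
    have hd := E1.deriv
    have hL : HasDerivAt (fun s => ∑ r ∈ Finset.range k, deriv g s / (g s - c r))
        (∑ r ∈ Finset.range k,
          (deriv (deriv g) 0 * (g 0 - c r) - deriv g 0 * deriv g 0) / (g 0 - c r) ^ 2)
        0 := by
      apply HasDerivAt.fun_sum
      intro r hr
      exact ((hg'diff 0).hasDerivAt).div (((hgdiff 0).hasDerivAt).sub_const _)
        (hb0 r hr).ne'
    have hzero : (∑ r ∈ Finset.range k,
        (deriv (deriv g) 0 * (g 0 - c r) - deriv g 0 * deriv g 0) / (g 0 - c r) ^ 2)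
        = 0 := by
      have h : deriv (fun s => ∑ r ∈ Finset.range k, deriv g s / (g s - c r)) 0
          = deriv (fun _ : ℝ => (1 : ℝ)) 0 := hd.self_of_nhds
      rw [hL.deriv] at h
      rw [h]
      simp
    have hsplit : ∀ r ∈ Finset.range k,
        (deriv (deriv g) 0 * (g 0 - c r) - deriv g 0 * deriv g 0) / (g 0 - c r) ^ 2
        = deriv (deriv g) 0 * (g 0 - c r)⁻¹
          - (deriv g 0) ^ 2 * ((g 0 - c r) ^ 2)⁻¹ := by
      intro r hr
      have hne := (hb0 r hr).ne'
      field_simp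
    rw [Finset.sum_congr rfl hsplit, Finset.sum_sub_distrib,
      ← Finset.mul_sum, ← Finset.mul_sum, hS1, hS2, sub_eq_zero] at hzero
    exact hzero
  -- conclude
  have hKH : K * H ≠ 0 := by positivity
  have hd1 : deriv g 0 = 1 / (K * H) := by
    rw [eq_div_iff hKH]
    exact Eq1
  refine ⟨hd1, ?_⟩
  rw [hd1] at Eq2
  have hKHne : K * H ^ 3 ≠ 0 := by positivity
  rw [eq_div_iff hKHne]
  have hK2 : (K : ℝ) ^ 2 ≠ 0 := by positivity
  have h3 : deriv (deriv g) 0 * (K * H) * (K * H) ^ 2 = K ^ 2 * H2 := by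
    calc deriv (deriv g) 0 * (K * H) * (K * H) ^ 2
        = (1 / (K * H)) ^ 2 * (K ^ 2 * H2) * (K * H) ^ 2 := by rw [Eq2]
      _ = K ^ 2 * H2 * ((K * H) ^ 2 * ((K * H) ^ 2)⁻¹) := by
          rw [one_div, inv_pow]; ring
      _ = K ^ 2 * H2 := by rw [mul_inv_cancel₀ (pow_ne_zero 2 hKH), mul_one]
  apply mul_left_cancel₀ hK2
  calc K ^ 2 * (deriv (deriv g) 0 * (K * H ^ 3))
      = deriv (deriv g) 0 * (K * H) * (K * H) ^ 2 := by ring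
    _ = K ^ 2 * H2 := h3
    _ = K ^ 2 * H2 := rfl
end
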